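/- Let K be a unital commutative associative algebra over a commutative ring R, realized on an R-module M, and let f, g be invertible R-linear endomorphisms of M. Then the isotope K^(f,g) is a unital algebra if and only if there exists an invertible w ∈ K such that the multiplication of K^(f,g) equals x ∗ y = x·w·y for all x, y; moreover this holds if and only if K^(f,g) is isomorphic to K as an R-algebra. -/

import Mathlib

/-- For a unital commutative associative R-algebra K and invertible f, g:
K^(f,g) is unital ↔ K^(f,g) is a Jordan isotope K^(w) ↔ K^(f,g) ≅ K. -/
theorem stmt4 {R K : Type*} [CommRing R] [CommRing K] [Algebra R K] (f g : K ≃ₗ[R] K) :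
    ((∃ e : K, ∀ x : K, f e * g x = x ∧ f x * g e = x) ↔
      ∃ w : Kˣ, ∀ x y : K, f x * g y = x * w * y) ∧
    ((∃ w : Kˣ, ∀ x y : K, f x * g y = x * w * y) ↔
      ∃ φ : K ≃ₗ[R] K, ∀ x y : K, φ (f x * g y) = φ x * φ y) := by
  have key : (∃ e : K, ∀ x : K, f e * g x = x ∧ f x * g e = x) →
      ∃ w : Kˣ, ∀ x y : K, f x * g y = x * w * y := by
    rintro ⟨e, he⟩
    have hfe : f e * g 1 = 1 := (he 1).1
    have hge : f 1 * g e = 1 := (he 1).2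
    have hg : ∀ x, g x = g 1 * x := by
      intro x
      calc g x = (g 1 * f e) * g x := by rw [mul_comm (g 1), hfe, one_mul]
        _ = g 1 * (f e * g x) := by ring
        _ = g 1 * x := by rw [(he x).1]
    have hf : ∀ x, f x = f 1 * x := by
      intro x
      calc f x = (f 1 * g e) * f x := by rw [hge, one_mul]
        _ = f 1 * (f x * g e) := by ring
        _ = f 1 * x := by rw [(he x).2]
    refine ⟨⟨f 1 * g 1, g e * f e, ?_, ?_⟩, fun x y => by rw [hf, hg]; ring⟩
    · calc f 1 * g 1 * (g e * f e) = (f 1 * g e) * (f e * g 1) := by ring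
        _ = 1 := by rw [hfe, hge, one_mul]
    · calc g e * f e * (f 1 * g 1) = (f 1 * g e) * (f e * g 1) := by ring
        _ = 1 := by rw [hfe, hge, one_mul]
  refine ⟨⟨key, ?_⟩, ?_, ?_⟩
  · rintro ⟨w, hw⟩
    refine ⟨↑w⁻¹, fun x => ⟨?_, ?_⟩⟩
    · rw [hw]; rw [mul_assoc]; simp
    · rw [hw]; rw [mul_assoc]; simp
  · rintro ⟨w, hw⟩
    refine ⟨{ toFun := fun x => ↑w * x
              invFun := fun x => ↑w⁻¹ * x
              map_add' := fun a b => mul_add _ a b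
              map_smul' := fun r x => by simp [mul_smul_comm]
              left_inv := fun x => Units.inv_mul_cancel_left w x
              right_inv := fun x => Units.mul_inv_cancel_left w x }, ?_⟩
    intro x y
    simp only [LinearEquiv.coe_mk, Equiv.coe_fn_mk, LinearMap.coe_mk, AddHom.coe_mk]
    rw [hw]; ring
  · rintro ⟨φ, hφ⟩
    apply key
    refine ⟨φ.symm 1, fun x => ⟨?_, ?_⟩⟩
    · exact φ.injective (by simpa using hφ (φ.symm 1) x)
    · exact φ.injective (by simpa using hφ x (φ.symm 1))
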